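/- Let y be a Nash equilibrium and set d_i = M + σ(p+1) y_i^p − σ θ_i for i = 1,…,N. Then d_i > 0 for every i, Σ_{k=1}^N m_k/d_k < 1, and the Jacobian of the map F(y)_i = M y_i − Σ_{k=1}^N m_k y_k − σ(θ_i − y_i^p) y_i at y, namely the N×N matrix diag(d_1,…,d_N) − J_m where every row of J_m equals (m_1,…,m_N), has determinant Π_{i=1}^N d_i · (1 − Σ_{k=1}^N m_k/d_k), which is strictly positive. -/

import Mathlib

open Filter Topology Finset Real Matrix

/-- Non-degeneracy of the Jacobian at a Nash equilibrium: with
`d_i = M + σ(p+1) y_i^p - σ θ_i`, all `d_i > 0`, `Σ_k m_k/d_k < 1`, and the Jacobian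
matrix `diag(d) - J_m` (each row of `J_m` is `(m_1,…,m_N)`) has determinant
`(Π_i d_i)(1 - Σ_k m_k/d_k) > 0`. -/
theorem nash_equilibrium_jacobian_positive
    {N : ℕ} (hN : 0 < N)
    (m θ : Fin N → ℝ) (hm : ∀ i, 0 < m i) (hθ : ∀ i, 0 < θ i)
    {σ p : ℝ} (hσ : 0 < σ) (hp : 0 < p)
    (y : Fin N → ℝ) (hpos : ∀ i, 0 < y i)
    (heq : ∀ i, ∑ k, m k * (y k - y i) + σ * (θ i - y i ^ p) * y i = 0)
    (d : Fin N → ℝ)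
    (hd : ∀ i, d i = (∑ k, m k) + σ * (p + 1) * y i ^ p - σ * θ i) :
    (∀ i, 0 < d i) ∧
    (∑ k, m k / d k) < 1 ∧
    (Matrix.diagonal d - Matrix.of fun _ j : Fin N => m j).det
      = (∏ i, d i) * (1 - ∑ k, m k / d k) ∧
    0 < (Matrix.diagonal d - Matrix.of fun _ j : Fin N => m j).det := by
  set S : ℝ := ∑ k, m k * y k with hS
  haveI : Nonempty (Fin N) := Fin.pos_iff_nonempty.mp hN
  have hSpos : 0 < S := Finset.sum_pos (fun k _ => mul_pos (hm k) (hpos k)) Finset.univ_nonempty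
  -- rewrite d i
  have hd' : ∀ i, d i = σ * p * y i ^ p + S / y i := by
    intro i
    have hy := (hpos i).ne'
    have h1 := heq i
    have h2 : ∑ k, m k * (y k - y i) = S - (∑ k, m k) * y i := by
      rw [Finset.sum_mul]
      rw [← Finset.sum_sub_distrib]
      congr 1; ext k; ring
    rw [h2] at h1
    -- S - M y_i + σ (θ_i - y_i^p) y_i = 0
    have hθi : σ * θ i = σ * y i ^ p + (∑ k, m k) - S / y i := by
      field_simp at h1 ⊢
      nlinarith [h1]
    rw [hd i, hθi]
    field_simp
    ring
  have hyp : ∀ i, 0 < y i ^ p := fun i => Real.rpow_pos_of_pos (hpos i) p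
  have hdpos : ∀ i, 0 < d i := by
    intro i
    rw [hd' i]
    have := div_pos hSpos (hpos i)
    nlinarith [hyp i, mul_pos (mul_pos hσ hp) (hyp i)]
  have hdgt : ∀ i, S / y i < d i := by
    intro i
    rw [hd' i]
    nlinarith [mul_pos (mul_pos hσ hp) (hyp i)]
  -- sum bound
  have hsum : (∑ k, m k / d k) < 1 := by
    have h1 : ∑ k, m k / d k < ∑ k, m k * y k / S := by
      apply Finset.sum_lt_sum_of_nonempty Finset.univ_nonempty
      intro k _
      have h2 : m k / d k < m k / (S / y k) :=
        div_lt_div_of_pos_left (hm k) (div_pos hSpos (hpos k)) (hdgt k)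
      calc m k / d k < m k / (S / y k) := h2
        _ = m k * y k / S := by
            rw [div_div_eq_mul_div]
      ;
    have h3 : ∑ k, m k * y k / S = 1 := by
      rw [← Finset.sum_div, ← hS, div_self hSpos.ne']
    linarith
  refine ⟨hdpos, hsum, ?_⟩
  have hdet : (Matrix.diagonal d - Matrix.of fun _ j : Fin N => m j).det
      = (∏ i, d i) * (1 - ∑ k, m k / d k) := by
    have hA : IsUnit (Matrix.diagonal d).det := by
      rw [Matrix.det_diagonal]
      exact (Finset.prod_pos (fun i _ => hdpos i)).ne'.isUnit
    have hrw : (Matrix.diagonal d - Matrix.of fun _ j : Fin N => m j)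
        = Matrix.diagonal d + Matrix.replicateCol (Fin 1) (fun _ => (-1 : ℝ)) * Matrix.replicateRow (Fin 1) m := by
      ext i j
      simp [Matrix.mul_apply, Matrix.replicateCol, Matrix.replicateRow, sub_eq_add_neg]
    rw [hrw]; erw [Matrix.det_add_replicateCol_mul_replicateRow (ι := Fin 1) hA]; rw [Matrix.det_diagonal]
    congr 1
    have hdu : ∀ (A : Matrix (Fin 1) (Fin 1) ℝ) (inst : DecidableEq (Fin 1)),
        @Matrix.det (Fin 1) inst _ ℝ _ A = A 0 0 := by
      intro A inst
      rw [Subsingleton.elim inst (instDecidableEqFin 1)]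
      exact Matrix.det_fin_one A
    erw [hdu]
    have hinv : (Matrix.diagonal d)⁻¹ = Matrix.diagonal (fun i => (d i)⁻¹) := by
      apply Matrix.inv_eq_right_inv
      rw [Matrix.diagonal_mul_diagonal]
      convert Matrix.diagonal_one with i
      exact mul_inv_cancel₀ (hdpos i).ne'
    rw [hinv]
    simp [Matrix.mul_apply, Matrix.replicateRow, Matrix.replicateCol, Matrix.diagonal, Finset.mul_sum,
      Finset.sum_mul, div_eq_mul_inv]
    ring
  refine ⟨hdet, ?_⟩
  rw [hdet]
  exact mul_pos (Finset.prod_pos (fun i _ => hdpos i)) (by linarith)
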